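/- Let F be a nonarchimedean local field and Γ ⊆ PGL₂(F) a discrete cocompact subgroup. Then every point of P¹(F) ⊆ P¹(C) (C the completion of an algebraic closure of F) is a limit point of Γ: for each x ∈ P¹(F) there exist y ∈ P¹(C) and pairwise distinct γ_j ∈ Γ with γ_j(y) → x. -/

import Mathlib

open Filter Matrix

noncomputable section

/-- The projective general linear group PGL₂ of a field. -/
abbrev PGL2 (K : Type*) [Field K] := GL (Fin 2) K ⧸ Subgroup.center (GL (Fin 2) K)

variable (C : Type*) [Field C] [TopologicalSpace C] [IsTopologicalRing C]

instance : TopologicalSpace (Projectivization C (Fin 2 → C)) :=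
  instTopologicalSpaceQuotient

/-- The action of GL₂(C) on the projective line P¹(C) (Möbius transformations). -/
def pact (g : GL (Fin 2) C) :
    Projectivization C (Fin 2 → C) → Projectivization C (Fin 2 → C) :=
  Projectivization.map (Matrix.GeneralLinearGroup.toLin g).toLinearEquiv.toLinearMap
    (Matrix.GeneralLinearGroup.toLin g).toLinearEquiv.injective

variable {F : Type*} [Field F] (ι : F →+* C)

/-- The set of F-rational points of P¹(C). -/
def rationalPoints : Set (Projectivization C (Fin 2 → C)) :=
  {x | ∃ (v : Fin 2 → F) (h : (fun i => ι (v i)) ≠ 0),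
    x = Projectivization.mk C (fun i => ι (v i)) h}

end

/-! ### Auxiliary material -/

section SnormSec

variable {K : Type*} [NontriviallyNormedField K]

/-- Sum of norms of entries of a 2×2 matrix. -/
def Snorm (M : Matrix (Fin 2) (Fin 2) K) : ℝ := ∑ i, ∑ j, ‖M i j‖

lemma Snorm_nonneg (M : Matrix (Fin 2) (Fin 2) K) : 0 ≤ Snorm M := by
  refine Finset.sum_nonneg fun i _ => Finset.sum_nonneg fun j _ => norm_nonneg _

lemma Snorm_mul_le (M N : Matrix (Fin 2) (Fin 2) K) :
    Snorm (M * N) ≤ Snorm M * Snorm N := by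
  unfold Snorm
  calc ∑ i, ∑ j, ‖(M * N) i j‖
      ≤ ∑ i, ∑ j, ∑ l, ‖M i l‖ * ‖N l j‖ := by
        refine Finset.sum_le_sum fun i _ => Finset.sum_le_sum fun j _ => ?_
        rw [Matrix.mul_apply]
        exact (norm_sum_le _ _).trans (le_of_eq (by simp [norm_mul]))
    _ = ∑ i, ∑ l, ‖M i l‖ * ∑ j, ‖N l j‖ := by
        refine Finset.sum_congr rfl fun i _ => ?_
        rw [Finset.sum_comm]
        simp only [Finset.mul_sum, Fin.sum_univ_two]
        ring
    _ ≤ ∑ i, ∑ l, ‖M i l‖ * Snorm N := by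
        refine Finset.sum_le_sum fun i _ => Finset.sum_le_sum fun l _ => ?_
        refine mul_le_mul_of_nonneg_left ?_ (norm_nonneg _)
        exact Finset.single_le_sum (f := fun l' => ∑ j, ‖N l' j‖)
          (fun l' _ => Finset.sum_nonneg fun j _ => norm_nonneg _) (Finset.mem_univ l)
    _ = Snorm M * Snorm N := by
        unfold Snorm
        simp [← Finset.sum_mul]

lemma Snorm_smul (c : K) (M : Matrix (Fin 2) (Fin 2) K) :
    Snorm (c • M) = ‖c‖ * Snorm M := by
  unfold Snorm
  rw [Finset.mul_sum]
  refine Finset.sum_congr rfl fun i _ => ?_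
  rw [Finset.mul_sum]
  refine Finset.sum_congr rfl fun j _ => ?_
  simp [Matrix.smul_apply, norm_mul]

lemma Snorm_one : Snorm (1 : Matrix (Fin 2) (Fin 2) K) = 2 := by
  unfold Snorm
  simp [Fin.sum_univ_two, Matrix.one_apply]
  norm_num

/-- The scale-invariant "size" of a matrix. -/
noncomputable def muinv (M : Matrix (Fin 2) (Fin 2) K) : ℝ := Snorm M ^ 2 / ‖M.det‖

lemma muinv_smul (c : K) (hc : c ≠ 0) (M : Matrix (Fin 2) (Fin 2) K) :
    muinv (c • M) = muinv M := by
  unfold muinv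
  rw [Snorm_smul, Matrix.det_smul, mul_pow, norm_mul, norm_pow]
  rw [Fintype.card_fin]
  rw [mul_div_mul_left _ _ (pow_ne_zero _ (norm_ne_zero_iff.mpr hc))]

end SnormSec

lemma GL2_center_scalar {K : Type*} [Field K] {z : GL (Fin 2) K}
    (hz : z ∈ Subgroup.center (GL (Fin 2) K)) :
    ∃ lam : K, lam ≠ 0 ∧ (z : Matrix (Fin 2) (Fin 2) K) = lam • (1 : Matrix (Fin 2) (Fin 2) K) := by
  rw [Subgroup.mem_center_iff] at hz
  set m : Matrix (Fin 2) (Fin 2) K := (z : Matrix (Fin 2) (Fin 2) K) with hm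
  have hdet : m.det ≠ 0 := by
    exact ((Matrix.isUnit_iff_isUnit_det m).mp z.isUnit).ne_zero
  set T : GL (Fin 2) K := Matrix.GeneralLinearGroup.mkOfDetNeZero !![1,1;0,1]
    (by simp [Matrix.det_fin_two_of]) with hT
  set S : GL (Fin 2) K := Matrix.GeneralLinearGroup.mkOfDetNeZero !![1,0;1,1]
    (by simp [Matrix.det_fin_two_of]) with hS
  have hTval : (T : Matrix (Fin 2) (Fin 2) K) = !![1,1;0,1] := rfl
  have hSval : (S : Matrix (Fin 2) (Fin 2) K) = !![1,0;1,1] := rfl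
  have hT2 : !![1,1;0,1] * m = m * !![1,1;0,1] := by
    have := congrArg Units.val (hz T)
    simpa [hTval, ← hm] using this
  have hS2 : !![1,0;1,1] * m = m * !![1,0;1,1] := by
    have := congrArg Units.val (hz S)
    simpa [hSval, ← hm] using this
  rw [Matrix.eta_fin_two m] at hT2 hS2
  rw [Matrix.mul_fin_two, Matrix.mul_fin_two] at hT2 hS2
  have e1 := Matrix.ext_iff.mpr hT2 0 0
  have e2 := Matrix.ext_iff.mpr hT2 0 1
  have e3 := Matrix.ext_iff.mpr hS2 0 0
  simp at e1 e2 e3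
  have h10 : m 1 0 = 0 := by linear_combination e1
  have h11 : m 1 1 = m 0 0 := by linear_combination e2
  have h01 : m 0 1 = 0 := by linear_combination e3
  refine ⟨m 0 0, ?_, ?_⟩
  · intro h
    apply hdet
    rw [Matrix.det_fin_two, h10, h11, h01, h]
    ring
  · rw [Matrix.eta_fin_two m, h10, h11, h01]
    ext i j
    fin_cases i <;> fin_cases j <;> simp [Matrix.one_apply]

section Topo

variable {K : Type*} [NontriviallyNormedField K]

lemma units_closedEmbedding (R : Type*) [Ring R] [TopologicalSpace R] [IsTopologicalRing R]
    [T2Space R] : Topology.IsClosedEmbedding (Units.embedProduct R) := by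
  refine ⟨Units.isEmbedding_embedProduct, ?_⟩
  have : Set.range (Units.embedProduct R) =
      {p : R × Rᵐᵒᵖ | p.1 * p.2.unop = 1 ∧ p.2.unop * p.1 = 1} := by
    ext p
    constructor
    · rintro ⟨u, rfl⟩
      simp [Units.embedProduct]
    · rintro ⟨h1, h2⟩
      exact ⟨⟨p.1, p.2.unop, h1, h2⟩, by simp [Units.embedProduct]⟩
  rw [this]
  have h1 : IsClosed {p : R × Rᵐᵒᵖ | p.1 * p.2.unop = 1} :=
    isClosed_eq (continuous_fst.mul (MulOpposite.continuous_unop.comp continuous_snd))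
      continuous_const
  have h2 : IsClosed {p : R × Rᵐᵒᵖ | p.2.unop * p.1 = 1} :=
    isClosed_eq ((MulOpposite.continuous_unop.comp continuous_snd).mul continuous_fst)
      continuous_const
  exact h1.inter h2

lemma gl2_locallyCompact [CompleteSpace K] [LocallyCompactSpace K] :
    LocallyCompactSpace (GL (Fin 2) K) := by
  have h1 : LocallyCompactSpace (Matrix (Fin 2) (Fin 2) K) :=
    inferInstanceAs (LocallyCompactSpace (Fin 2 → Fin 2 → K))
  have h2 : LocallyCompactSpace (Matrix (Fin 2) (Fin 2) K)ᵐᵒᵖ :=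
    MulOpposite.opHomeomorph.symm.isClosedEmbedding.locallyCompactSpace
  exact (units_closedEmbedding (Matrix (Fin 2) (Fin 2) K)).locallyCompactSpace

lemma gl2_firstCountable :
    FirstCountableTopology (GL (Fin 2) K) := by
  have h1 : FirstCountableTopology (Matrix (Fin 2) (Fin 2) K) :=
    inferInstanceAs (FirstCountableTopology (Fin 2 → Fin 2 → K))
  have h2 : FirstCountableTopology (Matrix (Fin 2) (Fin 2) K)ᵐᵒᵖ :=
    MulOpposite.opHomeomorph.symm.isEmbedding.firstCountableTopology
  exact Units.isEmbedding_embedProduct.firstCountableTopology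

/-- Compact covering for an open continuous surjection from a locally compact space
onto a compact space. -/
lemma exists_compact_covering' {X Y : Type*} [TopologicalSpace X] [TopologicalSpace Y]
    [LocallyCompactSpace X] [CompactSpace Y] {q : X → Y}
    (hqo : IsOpenMap q) (hqs : Function.Surjective q) :
    ∃ K : Set X, IsCompact K ∧ ∀ y, ∃ k ∈ K, q k = y := by
  have h := fun x : X => exists_compact_mem_nhds x
  choose Kx hKxc hKxn using h
  have hcov : Set.univ ⊆ ⋃ x : X, q '' interior (Kx x) := by
    intro y _
    obtain ⟨x, rfl⟩ := hqs y
    exact Set.mem_iUnion.mpr ⟨x, ⟨x, mem_interior_iff_mem_nhds.mpr (hKxn x), rfl⟩⟩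
  obtain ⟨s, hs⟩ := isCompact_univ.elim_finite_subcover
    (fun x : X => q '' interior (Kx x)) (fun x => hqo _ isOpen_interior) hcov
  refine ⟨⋃ x ∈ s, Kx x, s.isCompact_biUnion (fun x _ => hKxc x), fun y => ?_⟩
  obtain ⟨x, hxs, k, hk, hqk⟩ := by
    have := hs (Set.mem_univ y)
    simpa using this
  exact ⟨k, Set.mem_biUnion hxs (interior_subset hk), hqk⟩

/-- The diagonal embedding of units into `GL (Fin 2)`. -/
def diagHom (K : Type*) [Field K] : Kˣ →* GL (Fin 2) K where
  toFun t := ⟨Matrix.diagonal ![1, (t : K)], Matrix.diagonal ![1, ((t⁻¹ : Kˣ) : K)],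
    by
      rw [Matrix.diagonal_mul_diagonal,
        show (fun i => ![1, (t:K)] i * ![1, ((t⁻¹ : Kˣ) : K)] i) = fun _ => (1:K) from by
          funext i; fin_cases i <;> simp, Matrix.diagonal_one],
    by
      rw [Matrix.diagonal_mul_diagonal,
        show (fun i => ![1, ((t⁻¹ : Kˣ) : K)] i * ![1, (t:K)] i) = fun _ => (1:K) from by
          funext i; fin_cases i <;> simp, Matrix.diagonal_one]⟩
  map_one' := by
    refine Units.ext ?_
    show Matrix.diagonal ![1, ((1:Kˣ) : K)] = 1
    rw [show (![1, ((1:Kˣ) : K)]) = fun _ => (1:K) from by funext i; fin_cases i <;> simp,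
      Matrix.diagonal_one]
  map_mul' s t := by
    refine Units.ext ?_
    show Matrix.diagonal ![1, ((s*t:Kˣ) : K)]
      = Matrix.diagonal ![1, (s : K)] * Matrix.diagonal ![1, (t : K)]
    rw [Matrix.diagonal_mul_diagonal,
      show (fun i => ![1, (s:K)] i * ![1, (t:K)] i) = ![1, ((s*t : Kˣ) : K)] from by
        funext i; fin_cases i <;> simp]

lemma diagHom_val {K : Type*} [Field K] (t : Kˣ) :
    ((diagHom K t : GL (Fin 2) K) : Matrix (Fin 2) (Fin 2) K) = Matrix.diagonal ![1, (t : K)] :=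
  rfl

lemma strictMono_nat_add_le {ψ : ℕ → ℕ} (h : StrictMono ψ) (m e : ℕ) : ψ m + e ≤ ψ (m + e) := by
  induction e with
  | zero => simp
  | succ e ih =>
    have h2 := h (show m + e < m + (e + 1) by omega)
    omega

end Topo

section PactLemmas
variable {C : Type*} [Field C] [TopologicalSpace C] [IsTopologicalRing C]

lemma mulVec_unit_ne_zero (g : GL (Fin 2) C) {u : Fin 2 → C} (hu : u ≠ 0) :
    (g : Matrix (Fin 2) (Fin 2) C) *ᵥ u ≠ 0 := by
  intro h
  apply hu
  have := congrArg (fun w => ((g⁻¹ : GL (Fin 2) C) : Matrix (Fin 2) (Fin 2) C) *ᵥ w) h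
  have h3 : IsUnit (g : Matrix (Fin 2) (Fin 2) C).det :=
    (Matrix.isUnit_iff_isUnit_det _).mp g.isUnit
  simpa only [Matrix.mulVec_mulVec, Matrix.coe_units_inv, Matrix.nonsing_inv_mul _ h3,
    Matrix.one_mulVec, Matrix.mulVec_zero] using this

lemma mk_congr {u v : Fin 2 → C} (h : u = v) (hu : u ≠ 0) :
    Projectivization.mk C u hu = Projectivization.mk C v (h ▸ hu) := by
  subst h; rfl

lemma pact_mk (g : GL (Fin 2) C) (u : Fin 2 → C) (hu : u ≠ 0) :
    pact C g (Projectivization.mk C u hu)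
      = Projectivization.mk C ((g : Matrix (Fin 2) (Fin 2) C) *ᵥ u)
        (mulVec_unit_ne_zero g hu) := by
  unfold pact
  rw [Projectivization.map_mk]
  exact mk_congr (by simp [Matrix.GeneralLinearGroup.toLin_apply, Matrix.mulVecLin_apply]) _

lemma tendsto_projmk {z : ℕ → Fin 2 → C} {zl : Fin 2 → C} (hz : ∀ j, z j ≠ 0)
    (hzl : zl ≠ 0) (h : Tendsto z atTop (nhds zl)) :
    Tendsto (fun j => Projectivization.mk C (z j) (hz j)) atTop
      (nhds (Projectivization.mk C zl hzl)) := by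
  have hs : Tendsto (fun j => (⟨z j, hz j⟩ : {u : Fin 2 → C // u ≠ 0})) atTop
      (nhds ⟨zl, hzl⟩) := by
    rw [tendsto_subtype_rng]
    exact h
  exact (continuous_quotient_mk'.tendsto _).comp hs

end PactLemmas

/-- if Γ is a discrete cocompact subgroup of PGL₂(F), F a nonarchimedean
local field embedded in the completion C of an algebraic closure of F, then every point
of P¹(F) ⊆ P¹(C) is a limit point of Γ. -/
theorem stmt_12 {F C : Type*} [NontriviallyNormedField F] [CompleteSpace F]
    [LocallyCompactSpace F] [IsUltrametricDist F]
    [NontriviallyNormedField C] [CompleteSpace C] [IsAlgClosed C] [IsUltrametricDist C]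
    (ι : F →+* C) (hι : Isometry ι)
    (Γ : Subgroup (PGL2 F)) (hΓ : DiscreteTopology Γ)
    (hcc : CompactSpace (PGL2 F ⧸ Γ)) :
    ∀ x ∈ rationalPoints C ι,
      ∃ (y : Projectivization C (Fin 2 → C)) (γ : ℕ → GL (Fin 2) F),
        (∀ j, (QuotientGroup.mk (γ j) : PGL2 F) ∈ Γ) ∧
        (∀ i j, i ≠ j →
          (QuotientGroup.mk (γ i) : PGL2 F) ≠ (QuotientGroup.mk (γ j) : PGL2 F)) ∧
        Tendsto (fun j => pact C (Matrix.GeneralLinearGroup.map ι (γ j)) y)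
          atTop (nhds x) := by
  classical
  rintro x ⟨v, hvx, rfl⟩
  haveI := gl2_locallyCompact (K := F)
  haveI := gl2_firstCountable (K := F)
  -- a scalar of norm < 1
  obtain ⟨π, hπpos, hπ1⟩ := NormedField.exists_norm_lt_one F
  have hπ0 : π ≠ 0 := fun h => by simp [h] at hπpos
  have hv0 : v ≠ 0 := by
    intro h
    apply hvx
    funext i
    simp [h]
  -- complete v to a basis
  obtain ⟨w, hdet⟩ : ∃ w : Fin 2 → F, v 0 * w 1 - w 0 * v 1 ≠ 0 := by
    by_cases h0 : v 0 = 0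
    · have h1 : v 1 ≠ 0 := by
        intro h1
        apply hv0
        funext i
        fin_cases i <;> simp [h0, h1]
      exact ⟨![1, 0], by simpa [h0] using h1⟩
    · exact ⟨![0, 1], by simpa using h0⟩
  set Pm : Matrix (Fin 2) (Fin 2) F := !![v 0, w 0; v 1, w 1] with hPm
  have hPmdet : Pm.det ≠ 0 := by simpa [hPm, Matrix.det_fin_two_of] using hdet
  set P : GL (Fin 2) F := Matrix.GeneralLinearGroup.mkOfDetNeZero Pm hPmdet with hP
  have hPval : (P : Matrix (Fin 2) (Fin 2) F) = Pm := rfl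
  set πu : Fˣ := Units.mk0 π hπ0 with hπu
  set D : GL (Fin 2) F := diagHom F πu with hD
  set a : GL (Fin 2) F := P * D * P⁻¹ with ha
  -- powers of a
  have hapow : ∀ d : ℕ, a ^ d = P * D ^ d * P⁻¹ := by
    intro d
    have := map_pow (MulAut.conj P).toMonoidHom D d
    simp only [MulEquiv.toMonoidHom_eq_coe, MonoidHom.coe_coe, MulAut.conj_apply] at this
    rw [ha, this]
  have hDpow : ∀ d : ℕ, ((D ^ d : GL (Fin 2) F) : Matrix (Fin 2) (Fin 2) F)
      = Matrix.diagonal ![1, π ^ d] := by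
    intro d
    rw [hD, ← map_pow (diagHom F) πu d, diagHom_val]
    congr 1
  have haval : ∀ d : ℕ, ((a ^ d : GL (Fin 2) F) : Matrix (Fin 2) (Fin 2) F)
      = Pm * Matrix.diagonal ![1, π ^ d] * ((P⁻¹ : GL (Fin 2) F) : Matrix (Fin 2) (Fin 2) F) := by
    intro d
    rw [hapow d]
    rw [Matrix.GeneralLinearGroup.coe_mul, Matrix.GeneralLinearGroup.coe_mul, hPval, hDpow]
  -- determinant of a^d
  have hPPinv : Pm.det * ((P⁻¹ : GL (Fin 2) F) : Matrix (Fin 2) (Fin 2) F).det = 1 := by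
    rw [← Matrix.det_mul, ← hPval, ← Matrix.GeneralLinearGroup.coe_mul, mul_inv_cancel P,
      Matrix.GeneralLinearGroup.coe_one, Matrix.det_one]
  have hdeta : ∀ d : ℕ, ((a ^ d : GL (Fin 2) F) : Matrix (Fin 2) (Fin 2) F).det = π ^ d := by
    intro d
    rw [haval d, Matrix.det_mul, Matrix.det_mul, Matrix.det_diagonal, Fin.prod_univ_two]
    simp only [Matrix.cons_val_zero, Matrix.cons_val_one, Matrix.head_cons, one_mul]
    calc Pm.det * π ^ d * ((P⁻¹ : GL (Fin 2) F) : Matrix (Fin 2) (Fin 2) F).det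
        = π ^ d * (Pm.det * ((P⁻¹ : GL (Fin 2) F) : Matrix (Fin 2) (Fin 2) F).det) := by ring
      _ = π ^ d := by rw [hPPinv, mul_one]
  -- Snorm lower bound for a^d
  set c : ℝ := Snorm ((P : Matrix (Fin 2) (Fin 2) F))
      * Snorm ((P⁻¹ : GL (Fin 2) F) : Matrix (Fin 2) (Fin 2) F) with hcdef
  have hc2 : (2:ℝ) ≤ c := by
    have h := Snorm_mul_le ((P : Matrix (Fin 2) (Fin 2) F))
      ((P⁻¹ : GL (Fin 2) F) : Matrix (Fin 2) (Fin 2) F)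
    rw [← Matrix.GeneralLinearGroup.coe_mul, mul_inv_cancel P,
      Matrix.GeneralLinearGroup.coe_one, Snorm_one] at h
    exact h
  have hcpos : (0:ℝ) < c := lt_of_lt_of_le two_pos hc2
  have hSa : ∀ d : ℕ, 1 / c ≤ Snorm ((a ^ d : GL (Fin 2) F) : Matrix (Fin 2) (Fin 2) F) := by
    intro d
    have hPinvPm : ((P⁻¹ : GL (Fin 2) F) : Matrix (Fin 2) (Fin 2) F) * Pm = 1 := by
      rw [← hPval, ← Matrix.GeneralLinearGroup.coe_mul, inv_mul_cancel P,
        Matrix.GeneralLinearGroup.coe_one]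
    have hDd : Matrix.diagonal ![1, π ^ d]
        = ((P⁻¹ : GL (Fin 2) F) : Matrix (Fin 2) (Fin 2) F)
          * (((a ^ d : GL (Fin 2) F) : Matrix (Fin 2) (Fin 2) F) * Pm) := by
      rw [haval d]
      calc Matrix.diagonal ![1, π ^ d]
          = 1 * Matrix.diagonal ![1, π ^ d] * 1 := by rw [one_mul, mul_one]
        _ = (((P⁻¹ : GL (Fin 2) F) : Matrix (Fin 2) (Fin 2) F) * Pm)
              * Matrix.diagonal ![1, π ^ d]
              * (((P⁻¹ : GL (Fin 2) F) : Matrix (Fin 2) (Fin 2) F) * Pm) := by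
            rw [hPinvPm]
        _ = ((P⁻¹ : GL (Fin 2) F) : Matrix (Fin 2) (Fin 2) F)
              * (Pm * Matrix.diagonal ![1, π ^ d]
                * ((P⁻¹ : GL (Fin 2) F) : Matrix (Fin 2) (Fin 2) F) * Pm) := by
            noncomm_ring
    have hSD : (1:ℝ) ≤ Snorm (Matrix.diagonal ![(1:F), π ^ d]) := by
      have : Snorm (Matrix.diagonal ![(1:F), π ^ d]) = 1 + ‖π ^ d‖ := by
        unfold Snorm
        rw [Fin.sum_univ_two, Fin.sum_univ_two]
        simp [Matrix.diagonal_apply]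
      rw [this]
      have := norm_nonneg (π ^ d)
      linarith
    have hmul := (Snorm_mul_le ((P⁻¹ : GL (Fin 2) F) : Matrix (Fin 2) (Fin 2) F)
      (((a ^ d : GL (Fin 2) F) : Matrix (Fin 2) (Fin 2) F) * Pm))
    have hmul2 := Snorm_mul_le ((a ^ d : GL (Fin 2) F) : Matrix (Fin 2) (Fin 2) F) Pm
    rw [← hDd] at hmul
    have hPn : 0 ≤ Snorm ((P⁻¹ : GL (Fin 2) F) : Matrix (Fin 2) (Fin 2) F) := Snorm_nonneg _
    have hPn2 : 0 ≤ Snorm ((P : Matrix (Fin 2) (Fin 2) F)) := Snorm_nonneg _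
    have key : 1 ≤ Snorm ((a ^ d : GL (Fin 2) F) : Matrix (Fin 2) (Fin 2) F) * c := by
      calc (1:ℝ) ≤ Snorm (Matrix.diagonal ![(1:F), π ^ d]) := hSD
        _ ≤ Snorm ((P⁻¹ : GL (Fin 2) F) : Matrix (Fin 2) (Fin 2) F)
            * (Snorm ((a ^ d : GL (Fin 2) F) : Matrix (Fin 2) (Fin 2) F) * Snorm Pm) := by
          refine hmul.trans ?_
          exact mul_le_mul_of_nonneg_left hmul2 hPn
        _ = Snorm ((a ^ d : GL (Fin 2) F) : Matrix (Fin 2) (Fin 2) F) * c := by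
          rw [hcdef, hPval]; ring
    rw [div_le_iff₀ hcpos]
    linarith
  -- the cocompact covering
  set q : GL (Fin 2) F → (PGL2 F ⧸ Γ) :=
    fun g => QuotientGroup.mk (QuotientGroup.mk g : PGL2 F) with hq
  have hqo : IsOpenMap q := by
    have h1 : IsOpenMap (QuotientGroup.mk : GL (Fin 2) F → PGL2 F) := QuotientGroup.isOpenMap_coe
    have h2 : IsOpenMap (QuotientGroup.mk : PGL2 F → PGL2 F ⧸ Γ) := QuotientGroup.isOpenMap_coe
    exact h2.comp h1
  have hqs : Function.Surjective q := by
    intro y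
    obtain ⟨z, rfl⟩ := QuotientGroup.mk_surjective y
    obtain ⟨g, rfl⟩ := QuotientGroup.mk_surjective z
    exact ⟨g, rfl⟩
  obtain ⟨K, hKc, hKcov⟩ := exists_compact_covering' hqo hqs
  choose k hkK hkq using fun n : ℕ => hKcov (q ((a ^ n)⁻¹))
  have hγmem : ∀ n : ℕ, (QuotientGroup.mk (a ^ n * k n) : PGL2 F) ∈ Γ := by
    intro n
    have h := QuotientGroup.eq.mp (hkq n)
    have h2 : ((QuotientGroup.mk (k n) : PGL2 F))⁻¹
        * (QuotientGroup.mk ((a ^ n)⁻¹) : PGL2 F)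
        = ((QuotientGroup.mk (a ^ n * k n) : PGL2 F))⁻¹ := by
      rw [← QuotientGroup.mk_inv, ← QuotientGroup.mk_mul, ← QuotientGroup.mk_inv]
      congr 1
    rw [h2] at h
    exact (Γ.inv_mem_iff).mp h
  -- subsequence along which k converges
  obtain ⟨kinf, hkinfK, ψ, hψmono, hψtend⟩ := hKc.tendsto_subseq hkK
  -- bound on the compact set
  set KK : Set (Matrix (Fin 2) (Fin 2) F) :=
    (fun p : GL (Fin 2) F × GL (Fin 2) F =>
      ((p.1 * p.2⁻¹ : GL (Fin 2) F) : Matrix (Fin 2) (Fin 2) F)) '' (K ×ˢ K) with hKK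
  have hKKc : IsCompact KK := by
    refine (hKc.prod hKc).image ?_
    exact Units.continuous_val.comp (continuous_fst.mul continuous_snd.inv)
  have hKKne : KK.Nonempty := by
    refine ⟨((k 0 * (k 0)⁻¹ : GL (Fin 2) F) : Matrix (Fin 2) (Fin 2) F), ⟨(k 0, k 0), ?_, rfl⟩⟩
    exact ⟨hkK 0, hkK 0⟩
  have hKKdet : ∀ M ∈ KK, M.det ≠ 0 := by
    rintro M ⟨p, _, rfl⟩
    exact ((Matrix.isUnit_iff_isUnit_det _).mp (p.1 * p.2⁻¹).isUnit).ne_zero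
  have hmucont : ContinuousOn (muinv (K := F)) KK := by
    unfold muinv
    refine ContinuousOn.div ?_ ?_ ?_
    · refine Continuous.continuousOn ?_
      refine Continuous.pow ?_ 2
      refine continuous_finset_sum _ fun i _ => continuous_finset_sum _ fun j _ => ?_
      exact ((continuous_apply j).comp (continuous_apply i)).norm
    · exact (Continuous.matrix_det continuous_id).norm.continuousOn
    · intro M hM
      exact norm_ne_zero_iff.mpr (hKKdet M hM)
  obtain ⟨M₀, hM₀, hBmax⟩ := hKKc.exists_isMaxOn hKKne hmucont
  set B : ℝ := muinv M₀ with hB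
  -- gap size L
  have hπinv : 1 < ‖π‖⁻¹ := by
    rw [lt_inv_comm₀ one_pos hπpos]
    simpa using hπ1
  obtain ⟨L₀, hL₀⟩ := pow_unbounded_of_one_lt (B * c ^ 2) hπinv
  set L : ℕ := max 1 L₀ with hLdef
  have hL1 : 1 ≤ L := le_max_left _ _
  have hLbig : B * c ^ 2 < (‖π‖⁻¹) ^ L := by
    refine hL₀.trans_le ?_
    exact pow_le_pow_right₀ (le_of_lt hπinv) (le_max_right _ _)
  -- the subsequence
  set n : ℕ → ℕ := fun j => ψ ((j + 1) * L) with hn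
  have hnmono : StrictMono n := by
    intro i j hij
    refine hψmono ?_
    exact (Nat.mul_lt_mul_right (Nat.lt_of_lt_of_le Nat.zero_lt_one hL1)).mpr (by omega)
  have hngap : ∀ i j : ℕ, i < j → n i + L ≤ n j := by
    intro i j hij
    have h1 : (i + 1) * L + L ≤ (j + 1) * L := by
      have : i + 2 ≤ j + 1 := by omega
      calc (i + 1) * L + L = (i + 2) * L := by ring
        _ ≤ (j + 1) * L := Nat.mul_le_mul_right L this
    calc n i + L = ψ ((i + 1) * L) + L := rfl
      _ ≤ ψ ((i + 1) * L + L) := strictMono_nat_add_le hψmono _ _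
      _ ≤ ψ ((j + 1) * L) := hψmono.monotone h1
  set γ : ℕ → GL (Fin 2) F := fun j => a ^ (n j) * k (n j) with hγ
  -- distinctness
  have hdist : ∀ i j : ℕ, i < j →
      (QuotientGroup.mk (γ i) : PGL2 F) ≠ (QuotientGroup.mk (γ j) : PGL2 F) := by
    intro i j hij heq
    have hz := QuotientGroup.eq.mp heq
    obtain ⟨lam, hlam0, hlamval⟩ := GL2_center_scalar hz
    set z₀ : GL (Fin 2) F := (γ i)⁻¹ * γ j with hz₀
    have hγj : γ j = γ i * z₀ := by
      rw [hz₀, mul_inv_cancel_left]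
    set d : ℕ := n j - n i with hd
    have hdL : L ≤ d := by
      have := hngap i j hij
      omega
    have hnj : n j = n i + d := by
      have := hngap i j hij
      omega
    have hkey : a ^ d = k (n i) * z₀ * (k (n j))⁻¹ := by
      have h2 : a ^ (n j) * k (n j) = a ^ (n i) * k (n i) * z₀ := by
        have := hγj
        simp only [hγ] at this
        exact this
      have hpow' : a ^ (n j) = a ^ (n i) * a ^ d := by rw [hnj, pow_add]
      rw [hpow', mul_assoc, mul_assoc] at h2
      have h3 := mul_left_cancel h2
      rw [eq_mul_inv_iff_mul_eq, h3]
    -- muinv on both sides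
    have hval : ((a ^ d : GL (Fin 2) F) : Matrix (Fin 2) (Fin 2) F)
        = lam • ((k (n i) * (k (n j))⁻¹ : GL (Fin 2) F) : Matrix (Fin 2) (Fin 2) F) := by
      rw [hkey]
      rw [Matrix.GeneralLinearGroup.coe_mul, Matrix.GeneralLinearGroup.coe_mul, hlamval]
      rw [Matrix.GeneralLinearGroup.coe_mul]
      rw [mul_smul_comm, mul_one, smul_mul_assoc]
    have hmem : ((k (n i) * (k (n j))⁻¹ : GL (Fin 2) F) : Matrix (Fin 2) (Fin 2) F) ∈ KK := by
      exact ⟨(k (n i), k (n j)), ⟨hkK _, hkK _⟩, rfl⟩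
    have hle : muinv ((a ^ d : GL (Fin 2) F) : Matrix (Fin 2) (Fin 2) F) ≤ B := by
      rw [hval, muinv_smul lam hlam0]
      exact hBmax hmem
    have hgt : B < muinv ((a ^ d : GL (Fin 2) F) : Matrix (Fin 2) (Fin 2) F) := by
      have ht : (0:ℝ) < ‖π‖ ^ d := pow_pos hπpos d
      have hSd := hSa d
      have h1c : (0:ℝ) < 1 / c := by positivity
      have hnum : (1 / c) ^ 2 ≤ Snorm ((a ^ d : GL (Fin 2) F) : Matrix (Fin 2) (Fin 2) F) ^ 2 := by
        exact pow_le_pow_left₀ (le_of_lt h1c) hSd 2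
      have hmu : (1 / c) ^ 2 / ‖π‖ ^ d
          ≤ muinv ((a ^ d : GL (Fin 2) F) : Matrix (Fin 2) (Fin 2) F) := by
        unfold muinv
        rw [hdeta d, norm_pow]
        exact div_le_div_of_nonneg_right hnum ht.le
      refine lt_of_lt_of_le ?_ hmu
      -- B < (1/c)^2 / ‖π‖^d
      have hπd : (‖π‖⁻¹) ^ L ≤ (‖π‖⁻¹) ^ d :=
        pow_le_pow_right₀ (le_of_lt hπinv) hdL
      have hBd : B * c ^ 2 < (‖π‖⁻¹) ^ d := lt_of_lt_of_le hLbig hπd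
      rw [inv_pow] at hBd
      have hc2pos : (0:ℝ) < c ^ 2 := by positivity
      have hstep : B < (‖π‖ ^ d)⁻¹ / c ^ 2 := by
        rw [lt_div_iff₀ hc2pos]
        exact hBd
      refine hstep.trans_le (le_of_eq ?_)
      rw [div_pow, one_pow]
      field_simp
    exact absurd hle (not_le.mpr hgt)
  -- the limit point y and convergence
  set ιv : Fin 2 → C := fun i => ι (v i) with hιv
  set Gm : GL (Fin 2) C := Matrix.GeneralLinearGroup.map ι kinf with hGm
  set y0 : Fin 2 → C := ((Gm⁻¹ : GL (Fin 2) C) : Matrix (Fin 2) (Fin 2) C) *ᵥ ιv with hy0def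
  have hmapval : ∀ g : GL (Fin 2) F,
      ((Matrix.GeneralLinearGroup.map ι g : GL (Fin 2) C) : Matrix (Fin 2) (Fin 2) C)
        = (g : Matrix (Fin 2) (Fin 2) F).map ι := fun g => rfl
  have hGmy0 : (Gm : Matrix (Fin 2) (Fin 2) C) *ᵥ y0 = ιv := by
    rw [hy0def, Matrix.mulVec_mulVec, ← Matrix.GeneralLinearGroup.coe_mul, mul_inv_cancel Gm,
      Matrix.GeneralLinearGroup.coe_one, Matrix.one_mulVec]
  have hy0 : y0 ≠ 0 := by
    intro h
    apply hvx
    rw [← hGmy0, h, Matrix.mulVec_zero]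
  refine ⟨Projectivization.mk C y0 hy0, γ, ?_, ?_, ?_⟩
  · intro j
    simp only [hγ]
    exact hγmem (n j)
  · intro i j hij
    rcases lt_or_gt_of_ne hij with h | h
    · exact hdist i j h
    · exact (hdist j i h).symm
  · -- convergence
    have hcontmap : Continuous fun g : GL (Fin 2) F =>
        ((g : Matrix (Fin 2) (Fin 2) F).map ι) *ᵥ y0 := by
      refine continuous_pi fun i => ?_
      simp only [Matrix.mulVec, dotProduct, Matrix.map_apply]
      refine continuous_finset_sum _ fun l _ => Continuous.mul ?_ continuous_const
      have hentry : Continuous fun M : Matrix (Fin 2) (Fin 2) F => M i l :=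
        continuous_apply_apply i l
      have hval : Continuous fun g : GL (Fin 2) F => (g : Matrix (Fin 2) (Fin 2) F) :=
        Units.continuous_val
      exact hι.continuous.comp (hentry.comp hval)
    set u : ℕ → Fin 2 → C := fun j => ((k (n j) : Matrix (Fin 2) (Fin 2) F).map ι) *ᵥ y0 with hu
    have hnatTop : Tendsto n atTop atTop := hnmono.tendsto_atTop
    have hktend : Tendsto (fun j => k (n j)) atTop (nhds kinf) := by
      have hsm : StrictMono (fun j : ℕ => (j + 1) * L) := fun p q h =>
        (Nat.mul_lt_mul_right (Nat.lt_of_lt_of_le Nat.zero_lt_one hL1)).mpr (by omega)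
      exact hψtend.comp hsm.tendsto_atTop
    have hutend : Tendsto u atTop (nhds ιv) := by
      have h2 := (hcontmap.tendsto kinf).comp hktend
      have h3 : ((kinf : Matrix (Fin 2) (Fin 2) F).map ι) *ᵥ y0 = ιv := by
        rw [← hmapval kinf, ← hGm]
        exact hGmy0
      rw [h3] at h2
      exact h2
    set piw : C := ι π with hpiw
    have hpiwn : ‖piw‖ < 1 := by
      rw [hpiw, hι.norm_map_of_map_zero (map_zero ι)]
      exact hπ1
    set Qv : Matrix (Fin 2) (Fin 2) C := Pm.map ι with hQv
    set Qv' : Matrix (Fin 2) (Fin 2) C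
      := (((P⁻¹ : GL (Fin 2) F) : Matrix (Fin 2) (Fin 2) F)).map ι with hQv'
    have hQQ : Qv' * Qv = 1 := by
      rw [hQv, hQv', ← Matrix.map_mul, ← hPval, ← Matrix.GeneralLinearGroup.coe_mul,
        inv_mul_cancel P, Matrix.GeneralLinearGroup.coe_one,
        Matrix.map_one ι (map_zero ι) (map_one ι)]
    have havalC : ∀ dd : ℕ, ((a ^ dd : GL (Fin 2) F) : Matrix (Fin 2) (Fin 2) F).map ι
        = Qv * Matrix.diagonal ![1, piw ^ dd] * Qv' := by
      intro dd
      rw [haval dd, Matrix.map_mul, Matrix.map_mul, Matrix.diagonal_map (map_zero ι)]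
      rw [show (fun i => ι (![1, π ^ dd] i)) = ![(1:C), piw ^ dd] from by
        funext i; fin_cases i <;> simp [map_pow, hpiw]]
    have hPmv : Pm *ᵥ ![(1:F), 0] = v := by
      funext i
      fin_cases i <;>
        simp [hPm, Matrix.mulVec, dotProduct, Fin.sum_univ_two]
    have hιmulVec : ∀ (M : Matrix (Fin 2) (Fin 2) F) (uu : Fin 2 → F),
        (M.map ι) *ᵥ (fun i => ι (uu i)) = fun i => ι ((M *ᵥ uu) i) := by
      intro M uu
      funext i
      exact (RingHom.map_mulVec ι M uu i).symm
    have hQve0 : Qv *ᵥ ![(1:C), 0] = ιv := by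
      have h1 : (fun i => ι ((![(1:F),0] : Fin 2 → F) i)) = ![(1:C), 0] := by
        funext i; fin_cases i <;> simp
      rw [hQv, ← h1, hιmulVec, hPmv]
    have hQv'ιv : Qv' *ᵥ ιv = ![(1:C), 0] := by
      rw [← hQve0, Matrix.mulVec_mulVec, hQQ, Matrix.one_mulVec]
    have hzdef : ∀ j, ((Matrix.GeneralLinearGroup.map ι (γ j) : GL (Fin 2) C)
        : Matrix (Fin 2) (Fin 2) C) *ᵥ y0
        = Qv *ᵥ (Matrix.diagonal ![1, piw ^ (n j)] *ᵥ (Qv' *ᵥ u j)) := by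
      intro j
      rw [hmapval]
      have hsplit : (γ j : Matrix (Fin 2) (Fin 2) F)
          = ((a ^ (n j) : GL (Fin 2) F) : Matrix (Fin 2) (Fin 2) F)
            * ((k (n j) : GL (Fin 2) F) : Matrix (Fin 2) (Fin 2) F) := by
        simp only [hγ]
        rw [Matrix.GeneralLinearGroup.coe_mul]
      rw [hsplit, Matrix.map_mul, havalC]
      rw [← Matrix.mulVec_mulVec, ← Matrix.mulVec_mulVec, ← Matrix.mulVec_mulVec]
    have hcj : Tendsto (fun j => Qv' *ᵥ u j) atTop (nhds (![(1:C), 0])) := by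
      rw [← hQv'ιv]
      exact ((continuous_const.matrix_mulVec continuous_id).tendsto ιv).comp hutend
    have hpiwtend : Tendsto (fun j => piw ^ (n j)) atTop (nhds 0) :=
      (tendsto_pow_atTop_nhds_zero_of_norm_lt_one hpiwn).comp hnatTop
    have hdj : Tendsto (fun j => Matrix.diagonal ![1, piw ^ (n j)] *ᵥ (Qv' *ᵥ u j)) atTop
        (nhds (![(1:C), 0])) := by
      rw [tendsto_pi_nhds]
      intro i
      simp only [Matrix.mulVec_diagonal]
      have hcji : Tendsto (fun j => (Qv' *ᵥ u j) i) atTop (nhds ((![(1:C), 0]) i)) :=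
        ((continuous_apply i).tendsto _).comp hcj
      fin_cases i
      · simpa using hcji
      · have := hpiwtend.mul hcji
        simpa using this
    have hztend : Tendsto (fun j => ((Matrix.GeneralLinearGroup.map ι (γ j) : GL (Fin 2) C)
        : Matrix (Fin 2) (Fin 2) C) *ᵥ y0) atTop (nhds ιv) := by
      simp only [hzdef]
      rw [← hQve0]
      exact ((continuous_const.matrix_mulVec continuous_id).tendsto _).comp hdj
    have hfun : (fun j => pact C (Matrix.GeneralLinearGroup.map ι (γ j))
          (Projectivization.mk C y0 hy0))
        = fun j => Projectivization.mk C
            (((Matrix.GeneralLinearGroup.map ι (γ j) : GL (Fin 2) C)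
              : Matrix (Fin 2) (Fin 2) C) *ᵥ y0)
            (mulVec_unit_ne_zero _ hy0) := by
      funext j
      exact pact_mk _ _ _
    rw [hfun]
    exact tendsto_projmk _ hvx hztend
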